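/- Let α : [−∞,0] → [−∞,+∞] be an order-preserving bijection, and for each ultrametric space X define g^α_X : I_ω(X) → J_ω(X) by g^α_X(∨_i t_i ⊙ δ_{x_i}) = ∨_i α(t_i) ∧ δ_{x_i}. Then each g^α_X is a well-defined bijective isometry, and for every nonexpanding map f : X → Y between ultrametric spaces one has J_ω(f) ∘ g^α_X = g^α_Y ∘ I_ω(f); thus the maps g^α_X determine an isomorphism of the functors I_ω and J_ω. -/

import Mathlib

open scoped ENNReal

noncomputable section

/-- A metric is an *ultrametric* if the strong triangle inequality holds. -/
def IsUltra (X : Type*) [MetricSpace X] : Prop :=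
  ∀ x y z : X, dist x y ≤ max (dist x z) (dist z y)

/-- `mmOf x α` is the max-min functional `∨ᵢ αᵢ ∧ δ_{x i}`,
`φ ↦ maxᵢ min (α i) (φ (x i))` (computed in the extended reals). -/
def mmOf {A : Type*} {n : ℕ} (x : Fin (n + 1) → A) (α : Fin (n + 1) → EReal) :
    (A → ℝ) → ℝ :=
  fun φ => (⨆ i, min (α i) ((φ (x i) : EReal))).toReal

/-- `μ` is a max-min measure of finite support, with support contained in `S`. -/
def IsMMOn {A : Type*} (S : Set A) (μ : (A → ℝ) → ℝ) : Prop :=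
  ∃ (n : ℕ) (x : Fin (n + 1) → A) (α : Fin (n + 1) → EReal),
    (∀ i, x i ∈ S) ∧ (∃ i, α i = ⊤) ∧ μ = mmOf x α

/-- `μ` is a max-min measure of finite support. -/
def IsMM {A : Type*} (μ : (A → ℝ) → ℝ) : Prop :=
  IsMMOn Set.univ μ

/-- `idemOf x α` is the idempotent measure `∨ᵢ αᵢ ⊙ δ_{x i}`,
`φ ↦ maxᵢ (α i + φ (x i))` (computed in the extended reals). -/
def idemOf {A : Type*} {n : ℕ} (x : Fin (n + 1) → A) (α : Fin (n + 1) → EReal) :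
    (A → ℝ) → ℝ :=
  fun φ => (⨆ i, (α i + (φ (x i) : EReal))).toReal

/-- `μ` is an idempotent measure of finite support, with support contained in `S`. -/
def IsIdemOn {A : Type*} (S : Set A) (μ : (A → ℝ) → ℝ) : Prop :=
  ∃ (n : ℕ) (x : Fin (n + 1) → A) (α : Fin (n + 1) → EReal),
    (∀ i, x i ∈ S) ∧ (∀ i, α i ≤ 0) ∧ (∃ i, α i = 0) ∧ μ = idemOf x α

/-- `μ` is an idempotent measure of finite support. -/
def IsIdem {A : Type*} (μ : (A → ℝ) → ℝ) : Prop :=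
  IsIdemOn Set.univ μ

/-- The Dirac measure `δ_a`. -/
def dirac {A : Type*} (a : A) : (A → ℝ) → ℝ := fun φ => φ a

/-- `FrE e r φ`: the function `φ` is constant on every open `r`-ball of the
(extended-valued) distance `e`; this is the family `𝓕_r`. -/
def FrE {A : Type*} (e : A → A → ℝ≥0∞) (r : ℝ≥0∞) (φ : A → ℝ) : Prop :=
  ∀ x y : A, e x y < r → φ x = φ y

/-- The ultrametric `d̂` on functionals:
`d̂(μ,ν) = inf {r > 0 ∣ μ φ = ν φ for every φ ∈ 𝓕_r}`. -/
def dHatE {A : Type*} (e : A → A → ℝ≥0∞) (μ ν : (A → ℝ) → ℝ) : ℝ≥0∞ :=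
  sInf {r : ℝ≥0∞ | 0 < r ∧ ∀ φ : A → ℝ, FrE e r φ → μ φ = ν φ}

/-- The pushforward `J_ω(f)` of functionals along `f`. -/
def Jmap {A B : Type*} (f : A → B) (μ : (A → ℝ) → ℝ) : (B → ℝ) → ℝ :=
  fun φ => μ (φ ∘ f)

/-- The extended distance of a metric space, as a two-variable function. -/
def eD (X : Type*) [PseudoEMetricSpace X] : X → X → ℝ≥0∞ :=
  fun x y => edist x y

/-- The monad multiplication (`ξ` for max-min measures, `ζ` for idempotent
measures): `mult M φ = M (μ ↦ μ φ)`. -/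
def mult {A : Type*} (M : (((A → ℝ) → ℝ) → ℝ) → ℝ) : (A → ℝ) → ℝ :=
  fun φ => M fun μ => μ φ


namespace GAux
open scoped Classical

open Classical in
/-- cell-sup of weights over the `R`-cell of `p`. -/
def cellSup {A : Type*} {n : ℕ} (R : A → A → Prop)
    (x : Fin (n + 1) → A) (α : Fin (n + 1) → EReal) (p : A) : EReal :=
  ⨆ i, if R (x i) p then α i else ⊥

lemma exists_sup_eq {n : ℕ} (g : Fin (n + 1) → EReal) :
    ∃ i, (⨆ j, g j) = g i ∧ ∀ j, g j ≤ g i := by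
  obtain ⟨i, hi⟩ := Finite.exists_max g
  exact ⟨i, le_antisymm (iSup_le hi) (le_iSup g i), hi⟩

lemma ereal_eq_of_forall_real_le {u v : EReal}
    (h : ∀ t : ℝ, (t : EReal) ≤ u ↔ (t : EReal) ≤ v) : u = v := by
  by_contra hne
  rcases lt_or_gt_of_ne hne with hlt | hlt
  · obtain ⟨t, h1, h2⟩ := EReal.exists_between_coe_real hlt
    exact absurd ((h t).mpr h2.le) (not_le.mpr h1)
  · obtain ⟨t, h1, h2⟩ := EReal.exists_between_coe_real hlt
    exact absurd ((h t).mp h2.le) (not_le.mpr h1)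

lemma ereal_eq_of_forall_nonpos_le {u v : EReal} (hu : u ≤ 0) (hv : v ≤ 0)
    (h : ∀ t : ℝ, t ≤ 0 → ((t : EReal) ≤ u ↔ (t : EReal) ≤ v)) : u = v := by
  by_contra hne
  rcases lt_or_gt_of_ne hne with hlt | hlt
  · obtain ⟨t, h1, h2⟩ := EReal.exists_between_coe_real hlt
    have ht : t ≤ 0 := by
      have : (t : EReal) ≤ 0 := h2.le.trans hv
      exact_mod_cast this
    exact absurd ((h t ht).mpr h2.le) (not_le.mpr h1)
  · obtain ⟨t, h1, h2⟩ := EReal.exists_between_coe_real hlt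
    have ht : t ≤ 0 := by
      have : (t : EReal) ≤ 0 := h2.le.trans hu
      exact_mod_cast this
    exact absurd ((h t ht).mp h2.le) (not_le.mpr h1)


variable {A : Type*} {n : ℕ} {R : A → A → Prop}

lemma cellSup_le_zero (x : Fin (n + 1) → A) {α : Fin (n + 1) → EReal}
    (hα : ∀ i, α i ≤ 0) (p : A) : cellSup R x α p ≤ 0 := by
  refine iSup_le fun i => ?_
  split
  · exact hα i
  · exact bot_le

lemma le_cellSup {x : Fin (n + 1) → A} (α : Fin (n + 1) → EReal) {p : A} {i : Fin (n + 1)}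
    (h : R (x i) p) : α i ≤ cellSup R x α p := by
  refine le_trans ?_ (le_iSup (fun i => if R (x i) p then α i else ⊥) i)
  simp [h]

lemma cellSup_attained {x : Fin (n + 1) → A} {α : Fin (n + 1) → EReal} {p : A}
    (h : cellSup R x α p ≠ ⊥) : ∃ i, R (x i) p ∧ α i = cellSup R x α p := by
  obtain ⟨i₀, heq, -⟩ := exists_sup_eq (fun i => if R (x i) p then α i else ⊥)
  have heq' : cellSup R x α p = if R (x i₀) p then α i₀ else ⊥ := heq
  by_cases hc : R (x i₀) p
  · exact ⟨i₀, hc, by rw [heq', if_pos hc]⟩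
  · exact absurd (by rw [heq', if_neg hc]) h

lemma idem_decomp (hR : Equivalence R) (x : Fin (n + 1) → A) (α : Fin (n + 1) → EReal)
    (φ : A → ℝ) (hφ : ∀ u v, R u v → φ u = φ v) :
    idemOf x α φ = (⨆ p, cellSup R x α p + ((φ p : ℝ) : EReal)).toReal := by
  unfold idemOf
  congr 1
  apply le_antisymm
  · refine iSup_le fun i => le_trans ?_ (le_iSup (fun p => cellSup R x α p + ((φ p : ℝ) : EReal)) (x i))
    exact add_le_add (le_cellSup α (hR.refl (x i))) le_rfl
  · refine iSup_le fun p => ?_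
    by_cases hb : cellSup R x α p = ⊥
    · rw [hb, EReal.bot_add]
      exact bot_le
    · obtain ⟨i₀, hc, hval⟩ := cellSup_attained hb
      have hφp : φ p = φ (x i₀) := (hφ _ _ hc).symm
      rw [← hval, hφp]
      exact le_iSup (fun i => α i + ((φ (x i) : ℝ) : EReal)) i₀

lemma mm_decomp (hR : Equivalence R) (x : Fin (n + 1) → A) (β : Fin (n + 1) → EReal)
    (φ : A → ℝ) (hφ : ∀ u v, R u v → φ u = φ v) :
    mmOf x β φ = (⨆ p, min (cellSup R x β p) ((φ p : ℝ) : EReal)).toReal := by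
  unfold mmOf
  congr 1
  apply le_antisymm
  · refine iSup_le fun i => le_trans ?_ (le_iSup (fun p => min (cellSup R x β p) ((φ p : ℝ) : EReal)) (x i))
    exact min_le_min (le_cellSup β (hR.refl (x i))) le_rfl
  · refine iSup_le fun p => ?_
    by_cases hb : cellSup R x β p = ⊥
    · rw [hb]
      simp
    · obtain ⟨i₀, hc, hval⟩ := cellSup_attained hb
      have hφp : φ p = φ (x i₀) := (hφ _ _ hc).symm
      rw [← hval, hφp]
      exact le_iSup (fun i => min (β i) ((φ (x i) : ℝ) : EReal)) i₀

lemma coe_le_toReal {t : ℝ} {u : EReal} (h : (t : EReal) ≤ u) (hu : u ≠ ⊤) : t ≤ u.toReal := by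
  have hb : u ≠ ⊥ := fun hb => by simp [hb] at h
  rw [← EReal.coe_toReal hu hb] at h
  exact_mod_cast h

lemma toReal_lt_coe {t : ℝ} {u : EReal} (h : u < (t : EReal)) (hb : u ≠ ⊥) : u.toReal < t := by
  have hu : u ≠ ⊤ := (h.trans (EReal.coe_lt_top t)).ne
  rw [← EReal.coe_toReal hu hb] at h
  exact_mod_cast h

lemma ne_top_of_le_zero {u : EReal} (h : u ≤ 0) : u ≠ ⊤ := fun hu => by simp [hu] at h

lemma idem_recover (hR : Equivalence R) (x : Fin (n + 1) → A) (α : Fin (n + 1) → EReal)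
    (hα : ∀ i, α i ≤ 0) (hα0 : ∃ i, α i = 0) (p : A) (t : ℝ) (ht : t ≤ 0) :
    (t : EReal) ≤ cellSup R x α p ↔
      t ≤ idemOf x α (fun q => if R q p then 0 else t - 1) := by
  set ψ : A → ℝ := fun q => if R q p then 0 else t - 1 with hψdef
  have hψ : ∀ q, ψ q = if R q p then 0 else t - 1 := fun q => rfl
  have hid : idemOf x α ψ = (⨆ i, α i + ((ψ (x i) : ℝ) : EReal)).toReal := rfl
  have hterm : ∀ i, ((ψ (x i) : ℝ) : EReal) ≤ 0 := by
    intro i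
    rw [hψ]
    split
    · simp
    · exact_mod_cast (by linarith : t - 1 ≤ (0 : ℝ))
  have hu0 : (⨆ i, α i + ((ψ (x i) : ℝ) : EReal)) ≤ 0 := by
    refine iSup_le fun i => ?_
    calc α i + ((ψ (x i) : ℝ) : EReal) ≤ 0 + 0 := add_le_add (hα i) (hterm i)
    _ = 0 := by rw [add_zero]
  constructor
  · intro h
    have hb : cellSup R x α p ≠ ⊥ := fun hb => by simp [hb] at h
    obtain ⟨i₀, hc, hval⟩ := cellSup_attained hb
    have hψ0 : ψ (x i₀) = 0 := by rw [hψ, if_pos hc]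
    have h1 : (t : EReal) ≤ ⨆ i, α i + ((ψ (x i) : ℝ) : EReal) := by
      refine le_trans ?_ (le_iSup (fun i => α i + ((ψ (x i) : ℝ) : EReal)) i₀)
      rw [hψ0]
      rw [EReal.coe_zero, add_zero, hval]
      exact h
    rw [hid]
    exact coe_le_toReal h1 (ne_top_of_le_zero hu0)
  · intro h
    by_contra hcon
    push_neg at hcon
    obtain ⟨iz, hiz⟩ := hα0
    have hnR : ¬ R (x iz) p := by
      intro hRi
      have h2 : (t : EReal) ≤ cellSup R x α p := by
        refine le_trans ?_ (hiz ▸ le_cellSup α hRi)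
        exact_mod_cast ht
      exact absurd h2 (not_le.mpr hcon)
    have hlow : ((t - 1 : ℝ) : EReal) ≤ ⨆ i, α i + ((ψ (x i) : ℝ) : EReal) := by
      refine le_trans ?_ (le_iSup (fun i => α i + ((ψ (x i) : ℝ) : EReal)) iz)
      have hψ1 : ψ (x iz) = t - 1 := by rw [hψ, if_neg hnR]
      rw [hψ1, hiz, zero_add]
    have hlt : (⨆ i, α i + ((ψ (x i) : ℝ) : EReal)) < (t : EReal) := by
      obtain ⟨j, hj, -⟩ := exists_sup_eq (fun i => α i + ((ψ (x i) : ℝ) : EReal))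
      rw [hj]
      by_cases hRj : R (x j) p
      · have hψ0 : ψ (x j) = 0 := by rw [hψ, if_pos hRj]
        rw [hψ0, EReal.coe_zero, add_zero]
        exact lt_of_le_of_lt (le_cellSup α hRj) hcon
      · have hψ1 : ψ (x j) = t - 1 := by rw [hψ, if_neg hRj]
        rw [hψ1]
        calc α j + ((t - 1 : ℝ) : EReal) ≤ 0 + ((t - 1 : ℝ) : EReal) := add_le_add (hα j) le_rfl
        _ = ((t - 1 : ℝ) : EReal) := zero_add _
        _ < (t : EReal) := by exact_mod_cast (by linarith : t - 1 < t)
    have hfin : idemOf x α ψ < t := by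
      rw [hid]
      refine toReal_lt_coe hlt fun hb => ?_
      rw [hb] at hlow
      exact (EReal.coe_ne_bot _) (le_bot_iff.mp hlow)
    exact absurd h (not_le.mpr hfin)

lemma mm_recover (hR : Equivalence R) (x : Fin (n + 1) → A) (β : Fin (n + 1) → EReal)
    (htop : ∃ i, β i = ⊤) (p : A) (t : ℝ) :
    (t : EReal) ≤ cellSup R x β p ↔
      mmOf x β (fun q => if R q p then t else t - 1) = t := by
  set ψ : A → ℝ := fun q => if R q p then t else t - 1 with hψdef
  have hψ : ∀ q, ψ q = if R q p then t else t - 1 := fun q => rfl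
  have hid : mmOf x β ψ = (⨆ i, min (β i) ((ψ (x i) : ℝ) : EReal)).toReal := rfl
  have hterm : ∀ i, min (β i) ((ψ (x i) : ℝ) : EReal) ≤ (t : EReal) := by
    intro i
    refine le_trans (min_le_right _ _) ?_
    rw [hψ]
    split
    · exact le_rfl
    · exact_mod_cast (by linarith : t - 1 ≤ t)
  have hut : (⨆ i, min (β i) ((ψ (x i) : ℝ) : EReal)) ≤ (t : EReal) := iSup_le hterm
  obtain ⟨iT, hiT⟩ := htop
  have hlow : ((t - 1 : ℝ) : EReal) ≤ ⨆ i, min (β i) ((ψ (x i) : ℝ) : EReal) := by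
    refine le_trans ?_ (le_iSup (fun i => min (β i) ((ψ (x i) : ℝ) : EReal)) iT)
    rw [hiT, top_inf_eq]
    rw [hψ]
    split
    · exact_mod_cast (by linarith : t - 1 ≤ t)
    · exact le_rfl
  constructor
  · intro h
    have hb : cellSup R x β p ≠ ⊥ := fun hb => by simp [hb] at h
    obtain ⟨i₀, hc, hval⟩ := cellSup_attained hb
    have hψt : ψ (x i₀) = t := by rw [hψ, if_pos hc]
    have hge : (t : EReal) ≤ ⨆ i, min (β i) ((ψ (x i) : ℝ) : EReal) := by
      refine le_trans ?_ (le_iSup (fun i => min (β i) ((ψ (x i) : ℝ) : EReal)) i₀)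
      rw [hψt]
      exact le_min (hval ▸ h) le_rfl
    rw [hid, le_antisymm hut hge, EReal.toReal_coe]
  · intro h
    by_contra hcon
    push_neg at hcon
    have hlt : (⨆ i, min (β i) ((ψ (x i) : ℝ) : EReal)) < (t : EReal) := by
      obtain ⟨j, hj, -⟩ := exists_sup_eq (fun i => min (β i) ((ψ (x i) : ℝ) : EReal))
      rw [hj]
      by_cases hRj : R (x j) p
      · exact lt_of_le_of_lt (le_trans (min_le_left _ _) (le_cellSup β hRj)) hcon
      · have hψ1 : ψ (x j) = t - 1 := by rw [hψ, if_neg hRj]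
        refine lt_of_le_of_lt (min_le_right _ _) ?_
        rw [hψ1]
        exact_mod_cast (by linarith : t - 1 < t)
    have hfin : mmOf x β ψ < t := by
      rw [hid]
      refine toReal_lt_coe hlt fun hb => ?_
      rw [hb] at hlow
      exact (EReal.coe_ne_bot _) (le_bot_iff.mp hlow)
    rw [h] at hfin
    exact lt_irrefl t hfin

section AVar

variable {a : EReal → EReal}

lemma a_bot (hmono : MonotoneOn a {t : EReal | t ≤ 0})
    (habij : Set.BijOn a {t : EReal | t ≤ 0} Set.univ) : a ⊥ = ⊥ := by
  obtain ⟨u, hu, hau⟩ := habij.surjOn (Set.mem_univ (⊥ : EReal))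
  have : a ⊥ ≤ a u := hmono (by simp) hu bot_le
  rw [hau] at this
  exact le_bot_iff.mp this

lemma a_zero (hmono : MonotoneOn a {t : EReal | t ≤ 0})
    (habij : Set.BijOn a {t : EReal | t ≤ 0} Set.univ) : a 0 = ⊤ := by
  obtain ⟨u, hu, hau⟩ := habij.surjOn (Set.mem_univ (⊤ : EReal))
  have : a u ≤ a 0 := hmono hu (by simp) hu
  rw [hau] at this
  exact top_le_iff.mp this

lemma a_inj (habij : Set.BijOn a {t : EReal | t ≤ 0} Set.univ) {u v : EReal}
    (hu : u ≤ 0) (hv : v ≤ 0) (h : a u = a v) : u = v :=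
  habij.injOn hu hv h

lemma a_cellSup (hmono : MonotoneOn a {t : EReal | t ≤ 0})
    (habij : Set.BijOn a {t : EReal | t ≤ 0} Set.univ)
    (x : Fin (n + 1) → A) {α : Fin (n + 1) → EReal} (hα : ∀ i, α i ≤ 0) (p : A) :
    cellSup R x (fun i => a (α i)) p = a (cellSup R x α p) := by
  have hb : a ⊥ = ⊥ := a_bot hmono habij
  have key : ∀ i, (if R (x i) p then a (α i) else ⊥) = a (if R (x i) p then α i else ⊥) := by
    intro i
    split
    · rfl
    · rw [hb]
  have hmem : ∀ i, (if R (x i) p then α i else ⊥) ∈ {t : EReal | t ≤ 0} := by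
    intro i
    simp only [Set.mem_setOf_eq]
    split
    · exact hα i
    · exact bot_le
  unfold cellSup
  simp only [key]
  obtain ⟨i₀, heq, hmax⟩ := exists_sup_eq (fun i => if R (x i) p then α i else ⊥)
  rw [heq]
  refine le_antisymm (iSup_le fun i => hmono (hmem i) (hmem i₀) (hmax i)) ?_
  exact le_iSup (fun i => a (if R (x i) p then α i else ⊥)) i₀

end AVar

lemma psi_respects (hR : Equivalence R) (p : A) (c d : ℝ) :
    ∀ u v, R u v → (if R u p then c else d) = (if R v p then c else d) := by
  intro u v huv
  by_cases h : R u p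
  · rw [if_pos h, if_pos (hR.trans (hR.symm huv) h)]
  · rw [if_neg h, if_neg fun h' => h (hR.trans huv h')]

/-- Idempotent side: functional equality on `R`-respecting tests iff cell-sups agree. -/
lemma idem_eq_iff_cellSup (hR : Equivalence R) {m k : ℕ}
    {x : Fin (m + 1) → A} {x' : Fin (k + 1) → A}
    {α : Fin (m + 1) → EReal} {α' : Fin (k + 1) → EReal}
    (hα : ∀ i, α i ≤ 0) (hα0 : ∃ i, α i = 0)
    (hα' : ∀ i, α' i ≤ 0) (hα0' : ∃ i, α' i = 0) :
    (∀ φ : A → ℝ, (∀ u v, R u v → φ u = φ v) → idemOf x α φ = idemOf x' α' φ)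
      ↔ ∀ p, cellSup R x α p = cellSup R x' α' p := by
  constructor
  · intro h p
    refine ereal_eq_of_forall_nonpos_le (cellSup_le_zero x hα p) (cellSup_le_zero x' hα' p)
      fun t ht => ?_
    rw [idem_recover hR x α hα hα0 p t ht, idem_recover hR x' α' hα' hα0' p t ht,
      h _ (psi_respects hR p 0 (t - 1))]
  · intro h φ hφ
    rw [idem_decomp hR x α φ hφ, idem_decomp hR x' α' φ hφ]
    congr 1
    exact iSup_congr fun p => by rw [h p]

/-- Max-min side: functional equality on `R`-respecting tests iff cell-sups agree. -/
lemma mm_eq_iff_cellSup (hR : Equivalence R) {m k : ℕ}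
    {x : Fin (m + 1) → A} {x' : Fin (k + 1) → A}
    {β : Fin (m + 1) → EReal} {β' : Fin (k + 1) → EReal}
    (hβ : ∃ i, β i = ⊤) (hβ' : ∃ i, β' i = ⊤) :
    (∀ φ : A → ℝ, (∀ u v, R u v → φ u = φ v) → mmOf x β φ = mmOf x' β' φ)
      ↔ ∀ p, cellSup R x β p = cellSup R x' β' p := by
  constructor
  · intro h p
    refine ereal_eq_of_forall_real_le fun t => ?_
    rw [mm_recover hR x β hβ p t, mm_recover hR x' β' hβ' p t,
      h _ (psi_respects hR p t (t - 1))]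
  · intro h φ hφ
    rw [mm_decomp hR x β φ hφ, mm_decomp hR x' β' φ hφ]
    congr 1
    exact iSup_congr fun p => by rw [h p]

/-- The master equivalence. -/
lemma core_iff (hR : Equivalence R) {a : EReal → EReal}
    (hmono : MonotoneOn a {t : EReal | t ≤ 0})
    (habij : Set.BijOn a {t : EReal | t ≤ 0} Set.univ) {m k : ℕ}
    {x : Fin (m + 1) → A} {x' : Fin (k + 1) → A}
    {α : Fin (m + 1) → EReal} {α' : Fin (k + 1) → EReal}
    (hα : ∀ i, α i ≤ 0) (hα0 : ∃ i, α i = 0)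
    (hα' : ∀ i, α' i ≤ 0) (hα0' : ∃ i, α' i = 0) :
    (∀ φ : A → ℝ, (∀ u v, R u v → φ u = φ v) → idemOf x α φ = idemOf x' α' φ)
      ↔ (∀ φ : A → ℝ, (∀ u v, R u v → φ u = φ v) →
          mmOf x (fun i => a (α i)) φ = mmOf x' (fun i => a (α' i)) φ) := by
  have hβ : ∃ i, a (α i) = ⊤ := by
    obtain ⟨i, hi⟩ := hα0
    exact ⟨i, by rw [hi, a_zero hmono habij]⟩
  have hβ' : ∃ i, a (α' i) = ⊤ := by
    obtain ⟨i, hi⟩ := hα0'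
    exact ⟨i, by rw [hi, a_zero hmono habij]⟩
  rw [idem_eq_iff_cellSup hR hα hα0 hα' hα0', mm_eq_iff_cellSup hR hβ hβ']
  constructor
  · intro h p
    rw [a_cellSup hmono habij x hα p, a_cellSup hmono habij x' hα' p, h p]
  · intro h p
    have hp := h p
    rw [a_cellSup hmono habij x hα p, a_cellSup hmono habij x' hα' p] at hp
    exact a_inj habij (cellSup_le_zero x hα p) (cellSup_le_zero x' hα' p) hp

end GAux

section Glue

open GAux

lemma ultra_equiv {X : Type*} [MetricSpace X] (hX : IsUltra X) {r : ℝ≥0∞} (hr : 0 < r) :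
    Equivalence (fun u v : X => edist u v < r) := by
  have tri : ∀ u v w : X, edist u w ≤ max (edist u v) (edist v w) := by
    intro u v w
    rw [edist_dist, edist_dist, edist_dist,
      ← Monotone.map_max (fun _ _ h => ENNReal.ofReal_le_ofReal h)]
    exact ENNReal.ofReal_le_ofReal (hX u w v)
  exact ⟨fun u => by rw [edist_self]; exact hr,
    fun {u v} h => by rwa [edist_comm],
    fun {u v w} h1 h2 => lt_of_le_of_lt (tri u v w) (max_lt h1 h2)⟩

/-- Plain functional equality version of the master equivalence. -/
lemma funeq_iff {A : Type*} {a : EReal → EReal}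
    (hmono : MonotoneOn a {t : EReal | t ≤ 0})
    (habij : Set.BijOn a {t : EReal | t ≤ 0} Set.univ) {m k : ℕ}
    {x : Fin (m + 1) → A} {x' : Fin (k + 1) → A}
    {α : Fin (m + 1) → EReal} {α' : Fin (k + 1) → EReal}
    (hα : ∀ i, α i ≤ 0) (hα0 : ∃ i, α i = 0)
    (hα' : ∀ i, α' i ≤ 0) (hα0' : ∃ i, α' i = 0) :
    idemOf x α = idemOf x' α' ↔
      mmOf x (fun i => a (α i)) = mmOf x' (fun i => a (α' i)) := by
  have h := core_iff (R := fun u v : A => u = v) (x := x) (x' := x') eq_equivalence hmono habij hα hα0 hα' hα0'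
  constructor
  · intro he
    funext φ
    exact (h.mp fun φ _ => by rw [he]) φ (fun u v huv => by rw [huv])
  · intro he
    funext φ
    exact (h.mpr fun φ _ => by rw [he]) φ (fun u v huv => by rw [huv])

open Classical in
/-- The map `g^a`. -/
def gmap {A : Type*} (a : EReal → EReal) (μ : (A → ℝ) → ℝ) : (A → ℝ) → ℝ :=
  if h : IsIdem μ then
    mmOf h.choose_spec.choose fun i => a (h.choose_spec.choose_spec.choose i)
  else μ

lemma gmap_spec {A : Type*} {a : EReal → EReal}
    (hmono : MonotoneOn a {t : EReal | t ≤ 0})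
    (habij : Set.BijOn a {t : EReal | t ≤ 0} Set.univ) {n : ℕ}
    (x : Fin (n + 1) → A) (α : Fin (n + 1) → EReal)
    (hα : ∀ i, α i ≤ 0) (hα0 : ∃ i, α i = 0) :
    gmap a (idemOf x α) = mmOf x fun i => a (α i) := by
  have h : IsIdem (idemOf x α) := ⟨n, x, α, fun i => Set.mem_univ _, hα, hα0, rfl⟩
  rw [gmap, dif_pos h]
  obtain ⟨-, hβ, hβ0, heq⟩ := h.choose_spec.choose_spec.choose_spec
  exact (funeq_iff hmono habij hβ hβ0 hα hα0).mp heq.symm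

lemma gmap_bijOn {A : Type*} {a : EReal → EReal}
    (hmono : MonotoneOn a {t : EReal | t ≤ 0})
    (habij : Set.BijOn a {t : EReal | t ≤ 0} Set.univ) :
    Set.BijOn (gmap (A := A) a) {μ | IsIdem μ} {μ | IsMM μ} := by
  refine ⟨?_, ?_, ?_⟩
  · rintro μ ⟨n, x, α, -, hα, hα0, rfl⟩
    rw [Set.mem_setOf_eq, gmap_spec hmono habij x α hα hα0]
    obtain ⟨i, hi⟩ := hα0
    exact ⟨n, x, _, fun i => Set.mem_univ _, ⟨i, by rw [hi, a_zero hmono habij]⟩, rfl⟩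
  · rintro μ ⟨n, x, α, -, hα, hα0, rfl⟩ ν ⟨m, y, γ, -, hγ, hγ0, rfl⟩ h
    rw [gmap_spec hmono habij x α hα hα0, gmap_spec hmono habij y γ hγ hγ0] at h
    exact (funeq_iff hmono habij hα hα0 hγ hγ0).mpr h
  · rintro ν ⟨n, y, β, -, ⟨iT, hiT⟩, rfl⟩
    choose u hu1 hu2 using fun i => habij.surjOn (Set.mem_univ (β i))
    have hu0 : ∃ i, u i = 0 :=
      ⟨iT, a_inj habij (hu1 iT) le_rfl (by rw [hu2, hiT, a_zero hmono habij])⟩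
    refine ⟨idemOf y u, ⟨n, y, u, fun i => Set.mem_univ _, hu1, hu0, rfl⟩, ?_⟩
    rw [gmap_spec hmono habij y u hu1 hu0]
    have : (fun i => a (u i)) = β := funext hu2
    rw [this]

lemma gmap_isometry {X : Type*} [MetricSpace X] (hX : IsUltra X) {a : EReal → EReal}
    (hmono : MonotoneOn a {t : EReal | t ≤ 0})
    (habij : Set.BijOn a {t : EReal | t ≤ 0} Set.univ)
    (μ ν : (X → ℝ) → ℝ) (hμ : IsIdem μ) (hν : IsIdem ν) :
    dHatE (eD X) (gmap a μ) (gmap a ν) = dHatE (eD X) μ ν := by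
  obtain ⟨n, x, α, -, hα, hα0, rfl⟩ := hμ
  obtain ⟨m, y, γ, -, hγ, hγ0, rfl⟩ := hν
  rw [gmap_spec hmono habij x α hα hα0, gmap_spec hmono habij y γ hγ hγ0]
  unfold dHatE
  congr 1
  ext r
  simp only [Set.mem_setOf_eq]
  refine and_congr_right fun hr => ?_
  exact (core_iff (R := fun u v : X => edist u v < r) (x := x) (x' := y) (ultra_equiv hX hr)
    hmono habij hα hα0 hγ hγ0).symm

end Glue

/-- For an order-preserving bijection
`a : [-∞,0] → [-∞,+∞]`, the maps `g^a_X : I_ω(X) → J_ω(X)`,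
`g^a_X(∨ᵢ tᵢ ⊙ δ_{xᵢ}) = ∨ᵢ a(tᵢ) ∧ δ_{xᵢ}`, are well-defined bijective
isometries and commute with the pushforwards along every nonexpanding map
`f : X → Y`; thus they determine an isomorphism of the functors `I_ω` and
`J_ω`. -/
theorem galpha_functor_iso {X Y : Type*} [MetricSpace X] [MetricSpace Y]
    (hX : IsUltra X) (hY : IsUltra Y)
    (a : EReal → EReal) (hmono : MonotoneOn a {t : EReal | t ≤ 0})
    (habij : Set.BijOn a {t : EReal | t ≤ 0} Set.univ)
    (f : X → Y) (hf : ∀ p q : X, dist (f p) (f q) ≤ dist p q) :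
    ∃ (gX : ((X → ℝ) → ℝ) → ((X → ℝ) → ℝ))
      (gY : ((Y → ℝ) → ℝ) → ((Y → ℝ) → ℝ)),
      (∀ (n : ℕ) (x : Fin (n + 1) → X) (α : Fin (n + 1) → EReal),
          (∀ i, α i ≤ 0) → (∃ i, α i = 0) →
          gX (idemOf x α) = mmOf x (fun i => a (α i))) ∧
      (∀ (n : ℕ) (y : Fin (n + 1) → Y) (α : Fin (n + 1) → EReal),
          (∀ i, α i ≤ 0) → (∃ i, α i = 0) →
          gY (idemOf y α) = mmOf y (fun i => a (α i))) ∧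
      Set.BijOn gX {μ | IsIdem μ} {μ | IsMM μ} ∧
      Set.BijOn gY {μ | IsIdem μ} {μ | IsMM μ} ∧
      (∀ μ ν, IsIdem μ → IsIdem ν →
        dHatE (eD X) (gX μ) (gX ν) = dHatE (eD X) μ ν) ∧
      (∀ μ ν, IsIdem μ → IsIdem ν →
        dHatE (eD Y) (gY μ) (gY ν) = dHatE (eD Y) μ ν) ∧
      (∀ μ, IsIdem μ → Jmap f (gX μ) = gY (Jmap f μ)) := by
  refine ⟨gmap a, gmap a, ?_, ?_, ?_, ?_, ?_, ?_, ?_⟩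
  · intro n x α hα hα0
    exact gmap_spec hmono habij x α hα hα0
  · intro n y α hα hα0
    exact gmap_spec hmono habij y α hα hα0
  · exact gmap_bijOn hmono habij
  · exact gmap_bijOn hmono habij
  · exact gmap_isometry hX hmono habij
  · exact gmap_isometry hY hmono habij
  · rintro μ ⟨n, x, α, -, hα, hα0, rfl⟩
    rw [gmap_spec hmono habij x α hα hα0]
    have h1 : Jmap f (mmOf x fun i => a (α i)) = mmOf (f ∘ x) fun i => a (α i) := rfl
    have h2 : Jmap f (idemOf x α) = idemOf (f ∘ x) α := rfl
    rw [h1, h2, gmap_spec hmono habij (f ∘ x) α hα hα0]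

end
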